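/- Let Γ be a signed graph of order m+1 with ordered net-Laplacian spectrum (α_1, α_2, …, α_{m+1}), and let Γ' be the signed graph of order m obtained from Γ by deleting any one vertex together with all its incident edges, with ordered net-Laplacian spectrum (β_1, β_2, …, β_m). Then α_p − 1 ≤ β_p ≤ α_{p+1} + 1 for every p = 1, 2, …, m. -/

import Mathlib

open Polynomial

/-- A signed adjacency matrix: symmetric, zero diagonal, entries in {-1,0,1}. -/
def IsSignedAdj {n : ℕ} (A : Matrix (Fin n) (Fin n) ℝ) : Prop :=
  A.IsSymm ∧ (∀ i, A i i = 0) ∧ ∀ i j, A i j = -1 ∨ A i j = 0 ∨ A i j = 1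

/-- Degree of vertex `i`: number of neighbours. -/
noncomputable def deg {n : ℕ} (A : Matrix (Fin n) (Fin n) ℝ) (i : Fin n) : ℕ :=
  {j | A i j ≠ 0}.ncard

/-- Negative degree of vertex `i`. -/
noncomputable def negDeg {n : ℕ} (A : Matrix (Fin n) (Fin n) ℝ) (i : Fin n) : ℕ :=
  {j | A i j = -1}.ncard

/-- Positive degree of vertex `i`. -/
noncomputable def posDeg {n : ℕ} (A : Matrix (Fin n) (Fin n) ℝ) (i : Fin n) : ℕ :=
  {j | A i j = 1}.ncard

/-- Laplacian matrix `L = D - A`. -/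
noncomputable def lap {n : ℕ} (A : Matrix (Fin n) (Fin n) ℝ) : Matrix (Fin n) (Fin n) ℝ :=
  Matrix.diagonal (fun i => (deg A i : ℝ)) - A

/-- Net-Laplacian matrix `N = D± - A`, where `D±` is the diagonal of signed degrees. -/
noncomputable def netLap {n : ℕ} (A : Matrix (Fin n) (Fin n) ℝ) : Matrix (Fin n) (Fin n) ℝ :=
  Matrix.diagonal (fun i => ∑ j, A i j) - A

/-- Normalized net-Laplacian `D^{-1/2} N D^{-1/2}`. -/
noncomputable def normNetLap {n : ℕ} (A : Matrix (Fin n) (Fin n) ℝ) :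
    Matrix (Fin n) (Fin n) ℝ :=
  Matrix.diagonal (fun i => (Real.sqrt (deg A i))⁻¹) * netLap A *
    Matrix.diagonal (fun i => (Real.sqrt (deg A i))⁻¹)

/-- `μ` is the ordered (non-decreasing) spectrum of `M` : it is monotone and lists the
eigenvalues of `M` with multiplicity, i.e. the characteristic polynomial splits as
`∏ (X - μ i)`. -/
def IsOrderedSpectrum {n : ℕ} (M : Matrix (Fin n) (Fin n) ℝ) (μ : Fin n → ℝ) : Prop :=
  Monotone μ ∧ M.charpoly = ∏ i, (X - C (μ i))

/-- Deleting the edge `uv`: set the `(u,v)` and `(v,u)` entries to `0`. -/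
def deleteEdge {n : ℕ} (A : Matrix (Fin n) (Fin n) ℝ) (u v : Fin n) :
    Matrix (Fin n) (Fin n) ℝ :=
  Matrix.of fun i j => if (i = u ∧ j = v) ∨ (i = v ∧ j = u) then 0 else A i j

/-- Deleting the vertex `v`: principal submatrix omitting row/column `v`. -/
def deleteVertex {n : ℕ} (A : Matrix (Fin (n+1)) (Fin (n+1)) ℝ) (v : Fin (n+1)) :
    Matrix (Fin n) (Fin n) ℝ :=
  A.submatrix v.succAbove v.succAbove


open Polynomial

section Aux
open Matrix

/-! ### Characteristic polynomial of a Hermitian matrix -/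

lemma aux_charpoly_conj {n : ℕ} (M U : Matrix (Fin n) (Fin n) ℝ)
    (hU : U ∈ Matrix.unitaryGroup (Fin n) ℝ) :
    (U * M * star U).charpoly = M.charpoly := by
  unfold Matrix.charpoly
  have h1 : (U.map C : Matrix (Fin n) (Fin n) ℝ[X]) * (star U).map C = 1 := by
    rw [← Matrix.map_mul, Matrix.mem_unitaryGroup_iff.mp hU]; simp
  have key : charmatrix (U * M * star U) = U.map C * charmatrix M * (star U).map C := by
    unfold charmatrix
    rw [Matrix.mul_sub, Matrix.sub_mul]
    congr 1
    · have hsc : (Matrix.scalar (Fin n) (X : ℝ[X]))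
          = (X : ℝ[X]) • (1 : Matrix (Fin n) (Fin n) ℝ[X]) := by
        simp [Matrix.scalar, Matrix.smul_one_eq_diagonal]
      rw [hsc, Matrix.mul_smul, Matrix.smul_mul, Matrix.mul_one, h1]
    · simp [Matrix.map_mul]
  rw [key, Matrix.det_mul, Matrix.det_mul]
  have h2 : (U.map C).det * ((star U).map C).det = 1 := by
    rw [← Matrix.det_mul, h1, Matrix.det_one]
  calc (U.map C).det * (charmatrix M).det * ((star U).map C).det
      = (charmatrix M).det * ((U.map C).det * ((star U).map C).det) := by ring
    _ = (charmatrix M).det := by rw [h2, mul_one]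

lemma aux_charpoly_diag {n : ℕ} (d : Fin n → ℝ) :
    (Matrix.diagonal d).charpoly = ∏ i, (X - C (d i)) := by
  rw [Matrix.charpoly]
  have : charmatrix (Matrix.diagonal d) = Matrix.diagonal (fun i => X - C (d i)) := by
    ext i j
    by_cases h : i = j
    · subst h; simp [charmatrix_apply_eq]
    · simp [charmatrix_apply_ne _ _ _ h, Matrix.diagonal_apply_ne _ h]
  rw [this, Matrix.det_diagonal]

lemma aux_herm_charpoly {n : ℕ} (M : Matrix (Fin n) (Fin n) ℝ) (hM : M.IsHermitian) :
    M.charpoly = ∏ i, (X - C (hM.eigenvalues i)) := by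
  conv_lhs => rw [hM.spectral_theorem]
  rw [Unitary.conjStarAlgAut_apply, aux_charpoly_conj _ _ (hM.eigenvectorUnitary).2]
  have : (RCLike.ofReal ∘ hM.eigenvalues : Fin n → ℝ) = hM.eigenvalues := by
    funext i; simp
  rw [this, aux_charpoly_diag]

lemma aux_multiset_eq_of_prod_eq {n : ℕ} (f g : Fin n → ℝ)
    (h : ∏ i, (X - C (f i)) = ∏ i, (X - C (g i))) :
    Finset.univ.val.map f = Finset.univ.val.map g := by
  have hp : ∀ (f : Fin n → ℝ),
      ∏ i, (X - C (f i)) = (Multiset.map (fun a => X - C a) (Finset.univ.val.map f)).prod := by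
    intro f; rw [Multiset.map_map]; rfl
  rw [hp f, hp g] at h
  have := congrArg Polynomial.roots h
  rwa [Polynomial.roots_multiset_prod_X_sub_C, Polynomial.roots_multiset_prod_X_sub_C] at this

lemma aux_count_eq {n : ℕ} (f g : Fin n → ℝ)
    (h : Finset.univ.val.map f = Finset.univ.val.map g) (P : ℝ → Prop) [DecidablePred P] :
    (Finset.univ.filter (fun i => P (f i))).card
      = (Finset.univ.filter (fun i => P (g i))).card := by
  have h2 := congrArg (Multiset.countP P) h
  rw [Multiset.countP_map, Multiset.countP_map] at h2
  exact h2

/-! ### dot product linearity helpers -/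

lemma aux_sum_dot {n : ℕ} {ι : Type*} (s : Finset ι) (f : ι → Fin n → ℝ) (w : Fin n → ℝ) :
    (∑ i ∈ s, f i) ⬝ᵥ w = ∑ i ∈ s, f i ⬝ᵥ w := by
  simp only [dotProduct, Finset.sum_apply, Finset.sum_mul]
  rw [Finset.sum_comm]

lemma aux_dot_sum {n : ℕ} {ι : Type*} (s : Finset ι) (w : Fin n → ℝ) (f : ι → Fin n → ℝ) :
    w ⬝ᵥ (∑ i ∈ s, f i) = ∑ i ∈ s, w ⬝ᵥ f i := by
  simp only [dotProduct, Finset.sum_apply, Finset.mul_sum]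
  rw [Finset.sum_comm]

/-! ### eigenvectors as plain vectors -/

noncomputable def evec {n : ℕ} (M : Matrix (Fin n) (Fin n) ℝ) (hM : M.IsHermitian)
    (i : Fin n) : Fin n → ℝ := ⇑(hM.eigenvectorBasis i)

variable {n : ℕ} (M : Matrix (Fin n) (Fin n) ℝ) (hM : M.IsHermitian)

lemma evec_dot (i j : Fin n) : evec M hM i ⬝ᵥ evec M hM j = if i = j then 1 else 0 := by
  have h := orthonormal_iff_ite.mp hM.eigenvectorBasis.orthonormal i j
  rw [EuclideanSpace.inner_eq_star_dotProduct] at h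
  rw [dotProduct_comm]
  simpa [evec] using h

lemma evec_mulVec (i : Fin n) : M *ᵥ evec M hM i = hM.eigenvalues i • evec M hM i :=
  hM.mulVec_eigenvectorBasis i

lemma evec_li {ι : Type*} [Fintype ι] (f : ι → Fin n) (hf : Function.Injective f) :
    LinearIndependent ℝ (fun i => evec M hM (f i)) := by
  rw [Fintype.linearIndependent_iff]
  intro g hg j
  have h2 := congrArg (fun y => y ⬝ᵥ evec M hM (f j)) hg
  simp only [zero_dotProduct] at h2
  rw [aux_sum_dot] at h2
  simp only [smul_dotProduct, evec_dot] at h2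
  rw [Finset.sum_eq_single j] at h2
  · simpa using h2
  · intro b _ hb
    rw [if_neg (fun h => hb (hf h))]
    simp
  · simp

lemma evec_dot_expand {ι : Type*} [Fintype ι] (f : ι → Fin n) (hf : Function.Injective f)
    (a b : ι → ℝ) :
    (∑ i, a i • evec M hM (f i)) ⬝ᵥ (∑ j, b j • evec M hM (f j)) = ∑ i, a i * b i := by
  rw [aux_sum_dot]
  refine Finset.sum_congr rfl fun i _ => ?_
  rw [smul_dotProduct, aux_dot_sum]
  simp only [dotProduct_smul, evec_dot]
  rw [Finset.sum_eq_single i]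
  · simp [mul_comm]
  · intro b' _ hb
    rw [if_neg (fun h => hb (hf h).symm)]
    simp
  · simp

/-- Span of the eigenvectors indexed by `S`. -/
noncomputable def espan (S : Finset (Fin n)) : Submodule ℝ (Fin n → ℝ) :=
  Submodule.span ℝ (Set.range fun i : S => evec M hM i)

lemma espan_finrank (S : Finset (Fin n)) :
    Module.finrank ℝ (espan M hM S) = S.card := by
  unfold espan
  rw [finrank_span_eq_card (evec_li M hM (Subtype.val : S → Fin n) Subtype.val_injective)]
  exact Fintype.card_coe S

lemma espan_ray_le (S : Finset (Fin n)) (c : ℝ) (hc : ∀ i ∈ S, hM.eigenvalues i ≤ c)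
    (x : Fin n → ℝ) (hx : x ∈ espan M hM S) :
    x ⬝ᵥ (M *ᵥ x) ≤ c * (x ⬝ᵥ x) := by
  obtain ⟨a, ha⟩ := Submodule.mem_span_range_iff_exists_fun ℝ |>.mp hx
  have hMx : M *ᵥ x = ∑ i : S, (hM.eigenvalues i * a i) • evec M hM i := by
    rw [← ha]
    show M.mulVecLin _ = _
    rw [map_sum]
    refine Finset.sum_congr rfl fun i _ => ?_
    rw [_root_.map_smul, Matrix.mulVecLin_apply, evec_mulVec, smul_smul, mul_comm]
  have h1 : x ⬝ᵥ (M *ᵥ x) = ∑ i : S, hM.eigenvalues i * (a i)^2 := by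
    rw [hMx, ← ha, evec_dot_expand M hM _ Subtype.val_injective]
    exact Finset.sum_congr rfl fun i _ => by ring
  have h2 : x ⬝ᵥ x = ∑ i : S, (a i)^2 := by
    rw [← ha, evec_dot_expand M hM _ Subtype.val_injective]
    exact Finset.sum_congr rfl fun i _ => by ring
  rw [h1, h2, Finset.mul_sum]
  exact Finset.sum_le_sum fun i _ => mul_le_mul_of_nonneg_right (hc i i.2) (sq_nonneg _)

lemma espan_ray_ge (S : Finset (Fin n)) (c : ℝ) (hc : ∀ i ∈ S, c ≤ hM.eigenvalues i)
    (x : Fin n → ℝ) (hx : x ∈ espan M hM S) :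
    c * (x ⬝ᵥ x) ≤ x ⬝ᵥ (M *ᵥ x) := by
  obtain ⟨a, ha⟩ := Submodule.mem_span_range_iff_exists_fun ℝ |>.mp hx
  have hMx : M *ᵥ x = ∑ i : S, (hM.eigenvalues i * a i) • evec M hM i := by
    rw [← ha]
    show M.mulVecLin _ = _
    rw [map_sum]
    refine Finset.sum_congr rfl fun i _ => ?_
    rw [_root_.map_smul, Matrix.mulVecLin_apply, evec_mulVec, smul_smul, mul_comm]
  have h1 : x ⬝ᵥ (M *ᵥ x) = ∑ i : S, hM.eigenvalues i * (a i)^2 := by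
    rw [hMx, ← ha, evec_dot_expand M hM _ Subtype.val_injective]
    exact Finset.sum_congr rfl fun i _ => by ring
  have h2 : x ⬝ᵥ x = ∑ i : S, (a i)^2 := by
    rw [← ha, evec_dot_expand M hM _ Subtype.val_injective]
    exact Finset.sum_congr rfl fun i _ => by ring
  rw [h1, h2, Finset.mul_sum]
  exact Finset.sum_le_sum fun i _ => mul_le_mul_of_nonneg_right (hc i i.2) (sq_nonneg _)

/-! ### the zero-extension embedding -/

noncomputable def Emap {m : ℕ} (v : Fin (m+1)) : (Fin m → ℝ) →ₗ[ℝ] (Fin (m+1) → ℝ) where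
  toFun x j := if h : ∃ i, v.succAbove i = j then x h.choose else 0
  map_add' x y := by
    funext j
    rcases em (∃ i, v.succAbove i = j) with h|h
    · simp only [Pi.add_apply, dif_pos h]
    · simp only [Pi.add_apply, dif_neg h, add_zero]
  map_smul' c x := by
    funext j
    rcases em (∃ i, v.succAbove i = j) with h|h
    · simp only [Pi.smul_apply, dif_pos h, RingHom.id_apply, smul_eq_mul]
    · simp only [Pi.smul_apply, dif_neg h, RingHom.id_apply, smul_eq_mul, mul_zero]

lemma Emap_succAbove {m : ℕ} (v : Fin (m+1)) (x : Fin m → ℝ) (i : Fin m) :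
    Emap v x (v.succAbove i) = x i := by
  have h : ∃ i', v.succAbove i' = v.succAbove i := ⟨i, rfl⟩
  show (if h : _ then _ else _) = _
  rw [dif_pos h]
  congr 1
  exact Fin.succAbove_right_injective h.choose_spec

lemma Emap_v {m : ℕ} (v : Fin (m+1)) (x : Fin m → ℝ) : Emap v x v = 0 := by
  show (if h : _ then _ else _) = _
  rw [dif_neg]
  rintro ⟨i, hi⟩
  exact Fin.succAbove_ne v i hi

lemma Emap_inj {m : ℕ} (v : Fin (m+1)) : Function.Injective (Emap v) := by
  intro x y h
  funext i
  have := congrFun h (v.succAbove i)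
  rwa [Emap_succAbove, Emap_succAbove] at this

lemma Emap_dot {m : ℕ} (v : Fin (m+1)) (x y : Fin m → ℝ) :
    (Emap v x) ⬝ᵥ (Emap v y) = x ⬝ᵥ y := by
  unfold dotProduct
  rw [Fin.sum_univ_succAbove _ v]
  simp [Emap_v, Emap_succAbove]

lemma Emap_quad {m : ℕ} (v : Fin (m+1)) (N : Matrix (Fin (m+1)) (Fin (m+1)) ℝ) (x : Fin m → ℝ) :
    (Emap v x) ⬝ᵥ (N *ᵥ Emap v x) = x ⬝ᵥ ((N.submatrix v.succAbove v.succAbove) *ᵥ x) := by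
  unfold dotProduct Matrix.mulVec dotProduct
  rw [Fin.sum_univ_succAbove _ v]
  simp only [Emap_v, Emap_succAbove, zero_mul, zero_add]
  refine Finset.sum_congr rfl fun i _ => ?_
  congr 1
  rw [Fin.sum_univ_succAbove _ v]
  simp [Emap_v, Emap_succAbove, Matrix.submatrix_apply]

/-! ### misc -/

lemma aux_diag_quad_bound {m : ℕ} (d : Fin m → ℝ) (hd : ∀ i, |d i| ≤ 1) (x : Fin m → ℝ) :
    |x ⬝ᵥ (Matrix.diagonal d *ᵥ x)| ≤ x ⬝ᵥ x := by
  have h1 : x ⬝ᵥ (Matrix.diagonal d *ᵥ x) = ∑ i, d i * (x i)^2 := by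
    unfold dotProduct
    refine Finset.sum_congr rfl fun i _ => ?_
    rw [Matrix.mulVec_diagonal]
    ring
  have h2 : x ⬝ᵥ x = ∑ i, (x i)^2 := by
    unfold dotProduct
    exact Finset.sum_congr rfl fun i _ => (pow_two (x i)).symm
  rw [h1, h2]
  calc |∑ i, d i * (x i)^2| ≤ ∑ i, |d i * (x i)^2| := Finset.abs_sum_le_sum_abs _ _
    _ ≤ ∑ i, (x i)^2 := by
        refine Finset.sum_le_sum fun i _ => ?_
        rw [abs_mul, abs_of_nonneg (sq_nonneg (x i))]
        calc |d i| * (x i)^2 ≤ 1 * (x i)^2 :=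
              mul_le_mul_of_nonneg_right (hd i) (sq_nonneg _)
          _ = (x i)^2 := one_mul _

lemma aux_inf_nonzero {m : ℕ} (V W : Submodule ℝ (Fin m → ℝ))
    (h : m < Module.finrank ℝ V + Module.finrank ℝ W) :
    ∃ x, x ≠ 0 ∧ x ∈ V ⊓ W := by
  have hsum := Submodule.finrank_sup_add_finrank_inf_eq V W
  have hle : Module.finrank ℝ ↥(V ⊔ W) ≤ m := by
    have := Submodule.finrank_le (V ⊔ W)
    simpa using this
  have hpos : 0 < Module.finrank ℝ ↥(V ⊓ W) := by omega
  have hne : V ⊓ W ≠ ⊥ := by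
    intro hb
    rw [hb] at hpos
    simp at hpos
  obtain ⟨x, hx, hx0⟩ := Submodule.exists_mem_ne_zero_of_ne_bot hne
  exact ⟨x, hx0, hx⟩

end Aux

section Key
open Matrix

lemma aux_dot_self_pos {k : ℕ} {y : Fin k → ℝ} (hy : y ≠ 0) : 0 < y ⬝ᵥ y := by
  rcases lt_or_eq_of_le (Finset.sum_nonneg fun i _ => mul_self_nonneg (y i) :
      (0:ℝ) ≤ y ⬝ᵥ y) with h | h
  · exact h
  · exact absurd (dotProduct_self_eq_zero.mp h.symm) hy

theorem aux_key {m : ℕ} (N : Matrix (Fin (m+1)) (Fin (m+1)) ℝ) (N' : Matrix (Fin m) (Fin m) ℝ)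
    (hN : N.IsHermitian) (hN' : N'.IsHermitian) (v : Fin (m+1)) (d : Fin m → ℝ)
    (hsub : N.submatrix v.succAbove v.succAbove = N' + Matrix.diagonal d)
    (hd : ∀ i, |d i| ≤ 1)
    (α : Fin (m+1) → ℝ) (β : Fin m → ℝ)
    (hαm : Monotone α) (hαc : N.charpoly = ∏ i, (X - C (α i)))
    (hβm : Monotone β) (hβc : N'.charpoly = ∏ i, (X - C (β i)))
    (p : Fin m) : α p.castSucc - 1 ≤ β p ∧ β p ≤ α p.succ + 1 := by
  have hal : Finset.univ.val.map α = Finset.univ.val.map hN.eigenvalues :=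
    aux_multiset_eq_of_prod_eq _ _ (hαc.symm.trans (aux_herm_charpoly N hN))
  have hbm : Finset.univ.val.map β = Finset.univ.val.map hN'.eigenvalues :=
    aux_multiset_eq_of_prod_eq _ _ (hβc.symm.trans (aux_herm_charpoly N' hN'))
  have hp := p.2
  constructor
  · -- lower bound : α p.castSucc - 1 ≤ β p
    set c := α p.castSucc with hc
    set S : Finset (Fin (m+1)) := Finset.univ.filter (fun i => c ≤ hN.eigenvalues i) with hS
    set T : Finset (Fin m) := Finset.univ.filter (fun i => hN'.eigenvalues i ≤ β p) with hT
    have hScard : (m+1) - p.1 ≤ S.card := by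
      have h1 : S.card = (Finset.univ.filter (fun i => c ≤ α i)).card :=
        (aux_count_eq α hN.eigenvalues hal (fun t => c ≤ t)).symm
      have h2 : Finset.Ici p.castSucc ⊆ Finset.univ.filter (fun i => c ≤ α i) := by
        intro i hi
        exact Finset.mem_filter.mpr ⟨Finset.mem_univ _, hαm (Finset.mem_Ici.mp hi)⟩
      have h3 := Finset.card_le_card h2
      rw [Fin.card_Ici] at h3
      have hcast : (p.castSucc : ℕ) = p.1 := rfl
      omega
    have hTcard : p.1 + 1 ≤ T.card := by
      have h1 : T.card = (Finset.univ.filter (fun i => β i ≤ β p)).card :=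
        (aux_count_eq β hN'.eigenvalues hbm (fun t => t ≤ β p)).symm
      have h2 : Finset.Iic p ⊆ Finset.univ.filter (fun i => β i ≤ β p) := by
        intro i hi
        exact Finset.mem_filter.mpr ⟨Finset.mem_univ _, hβm (Finset.mem_Iic.mp hi)⟩
      have h3 := Finset.card_le_card h2
      rw [Fin.card_Iic] at h3
      omega
    have hdim : m + 1 < Module.finrank ℝ ((espan N' hN' T).map (Emap v))
        + Module.finrank ℝ (espan N hN S) := by
      have e1 : Module.finrank ℝ ((espan N' hN' T).map (Emap v)) = T.card := by
        rw [← (Submodule.equivMapOfInjective (Emap v) (Emap_inj v)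
          (espan N' hN' T)).finrank_eq]
        exact espan_finrank N' hN' T
      rw [e1, espan_finrank N hN S]
      omega
    obtain ⟨x, hx0, hxVW⟩ :=
      aux_inf_nonzero ((espan N' hN' T).map (Emap v)) (espan N hN S) hdim
    obtain ⟨hxV, hxW⟩ := hxVW
    obtain ⟨y, hyV, hyx⟩ := Submodule.mem_map.mp hxV
    have hy0 : y ≠ 0 := by
      intro h
      rw [h, map_zero] at hyx
      exact hx0 hyx.symm
    have hY : 0 < y ⬝ᵥ y := aux_dot_self_pos hy0
    have hxy : x ⬝ᵥ x = y ⬝ᵥ y := by rw [← hyx, Emap_dot]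
    have hq1 : c * (x ⬝ᵥ x) ≤ x ⬝ᵥ (N *ᵥ x) :=
      espan_ray_ge N hN S c (fun i hi => (Finset.mem_filter.mp hi).2) x hxW
    have hq2 : x ⬝ᵥ (N *ᵥ x) = y ⬝ᵥ (N' *ᵥ y) + y ⬝ᵥ (Matrix.diagonal d *ᵥ y) := by
      rw [← hyx, Emap_quad, hsub, Matrix.add_mulVec, dotProduct_add]
    have hq3 : y ⬝ᵥ (N' *ᵥ y) ≤ β p * (y ⬝ᵥ y) :=
      espan_ray_le N' hN' T (β p) (fun i hi => (Finset.mem_filter.mp hi).2) y hyV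
    have hq4 : |y ⬝ᵥ (Matrix.diagonal d *ᵥ y)| ≤ y ⬝ᵥ y := aux_diag_quad_bound d hd y
    have hq4' : y ⬝ᵥ (Matrix.diagonal d *ᵥ y) ≤ y ⬝ᵥ y := (abs_le.mp hq4).2
    rw [hxy] at hq1
    have hfin : c * (y ⬝ᵥ y) ≤ (β p + 1) * (y ⬝ᵥ y) := by nlinarith [hq1, hq2, hq3, hq4']
    have := le_of_mul_le_mul_right hfin hY
    linarith
  · -- upper bound : β p ≤ α p.succ + 1
    set c := α p.succ with hc
    set S : Finset (Fin (m+1)) := Finset.univ.filter (fun i => hN.eigenvalues i ≤ c) with hS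
    set T : Finset (Fin m) := Finset.univ.filter (fun i => β p ≤ hN'.eigenvalues i) with hT
    have hScard : p.1 + 2 ≤ S.card := by
      have h1 : S.card = (Finset.univ.filter (fun i => α i ≤ c)).card :=
        (aux_count_eq α hN.eigenvalues hal (fun t => t ≤ c)).symm
      have h2 : Finset.Iic p.succ ⊆ Finset.univ.filter (fun i => α i ≤ c) := by
        intro i hi
        exact Finset.mem_filter.mpr ⟨Finset.mem_univ _, hαm (Finset.mem_Iic.mp hi)⟩
      have h3 := Finset.card_le_card h2
      rw [Fin.card_Iic] at h3
      have : (p.succ : ℕ) = p.1 + 1 := rfl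
      omega
    have hTcard : m - p.1 ≤ T.card := by
      have h1 : T.card = (Finset.univ.filter (fun i => β p ≤ β i)).card :=
        (aux_count_eq β hN'.eigenvalues hbm (fun t => β p ≤ t)).symm
      have h2 : Finset.Ici p ⊆ Finset.univ.filter (fun i => β p ≤ β i) := by
        intro i hi
        exact Finset.mem_filter.mpr ⟨Finset.mem_univ _, hβm (Finset.mem_Ici.mp hi)⟩
      have h3 := Finset.card_le_card h2
      rw [Fin.card_Ici] at h3
      omega
    have hdim : m + 1 < Module.finrank ℝ ((espan N' hN' T).map (Emap v))
        + Module.finrank ℝ (espan N hN S) := by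
      have e1 : Module.finrank ℝ ((espan N' hN' T).map (Emap v)) = T.card := by
        rw [← (Submodule.equivMapOfInjective (Emap v) (Emap_inj v)
          (espan N' hN' T)).finrank_eq]
        exact espan_finrank N' hN' T
      rw [e1, espan_finrank N hN S]
      omega
    obtain ⟨x, hx0, hxVW⟩ :=
      aux_inf_nonzero ((espan N' hN' T).map (Emap v)) (espan N hN S) hdim
    obtain ⟨hxV, hxW⟩ := hxVW
    obtain ⟨y, hyV, hyx⟩ := Submodule.mem_map.mp hxV
    have hy0 : y ≠ 0 := by
      intro h
      rw [h, map_zero] at hyx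
      exact hx0 hyx.symm
    have hY : 0 < y ⬝ᵥ y := aux_dot_self_pos hy0
    have hxy : x ⬝ᵥ x = y ⬝ᵥ y := by rw [← hyx, Emap_dot]
    have hq1 : x ⬝ᵥ (N *ᵥ x) ≤ c * (x ⬝ᵥ x) :=
      espan_ray_le N hN S c (fun i hi => (Finset.mem_filter.mp hi).2) x hxW
    have hq2 : x ⬝ᵥ (N *ᵥ x) = y ⬝ᵥ (N' *ᵥ y) + y ⬝ᵥ (Matrix.diagonal d *ᵥ y) := by
      rw [← hyx, Emap_quad, hsub, Matrix.add_mulVec, dotProduct_add]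
    have hq3 : β p * (y ⬝ᵥ y) ≤ y ⬝ᵥ (N' *ᵥ y) :=
      espan_ray_ge N' hN' T (β p) (fun i hi => (Finset.mem_filter.mp hi).2) y hyV
    have hq4 : |y ⬝ᵥ (Matrix.diagonal d *ᵥ y)| ≤ y ⬝ᵥ y := aux_diag_quad_bound d hd y
    have hq4' : -(y ⬝ᵥ y) ≤ y ⬝ᵥ (Matrix.diagonal d *ᵥ y) := (abs_le.mp hq4).1
    rw [hxy] at hq1
    have hfin : β p * (y ⬝ᵥ y) ≤ (c + 1) * (y ⬝ᵥ y) := by nlinarith [hq1, hq2, hq3, hq4']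
    exact le_of_mul_le_mul_right hfin hY

end Key

section Final
open Matrix

lemma aux_netLap_sub {m : ℕ} (A : Matrix (Fin (m+1)) (Fin (m+1)) ℝ) (v : Fin (m+1)) :
    (netLap A).submatrix v.succAbove v.succAbove =
      netLap (deleteVertex A v) + Matrix.diagonal (fun i => A (v.succAbove i) v) := by
  unfold netLap deleteVertex
  ext i j
  by_cases h : i = j
  · subst h
    simp only [Matrix.submatrix_apply, Matrix.sub_apply, Matrix.add_apply,
      Matrix.diagonal_apply_eq]
    rw [Fin.sum_univ_succAbove (fun k => A (v.succAbove i) k) v]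
    ring
  · have hs : v.succAbove i ≠ v.succAbove j := fun hc => h (Fin.succAbove_right_injective hc)
    simp only [Matrix.submatrix_apply, Matrix.sub_apply, Matrix.add_apply,
      Matrix.diagonal_apply_ne _ h, Matrix.diagonal_apply_ne _ hs]
    ring

lemma aux_netLap_herm {k : ℕ} (A : Matrix (Fin k) (Fin k) ℝ) (hA : A.IsSymm) :
    (netLap A).IsHermitian := by
  unfold netLap
  ext i j
  simp only [Matrix.conjTranspose_apply, Matrix.sub_apply, star_trivial]
  by_cases h : i = j
  · subst h; ring
  · rw [Matrix.diagonal_apply_ne _ h, Matrix.diagonal_apply_ne _ (Ne.symm h)]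
    simp only [hA.apply i j]

lemma aux_deleteVertex_symm {m : ℕ} (A : Matrix (Fin (m+1)) (Fin (m+1)) ℝ) (hA : A.IsSymm)
    (v : Fin (m+1)) : (deleteVertex A v).IsSymm := by
  unfold deleteVertex
  ext i j
  simp only [Matrix.transpose_apply, Matrix.submatrix_apply]
  exact hA.apply _ _

end Final

/-- deleting any vertex, the ordered net-Laplacian spectra satisfy
alpha_p - 1 <= beta_p <= alpha_{p+1} + 1 for p = 1,...,m. -/
theorem stmt11 (m : ℕ) (A : Matrix (Fin (m+1)) (Fin (m+1)) ℝ) (hA : IsSignedAdj A)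
    (v : Fin (m+1)) (α : Fin (m+1) → ℝ) (β : Fin m → ℝ)
    (hα : IsOrderedSpectrum (netLap A) α)
    (hβ : IsOrderedSpectrum (netLap (deleteVertex A v)) β) :
    ∀ p : Fin m, α p.castSucc - 1 ≤ β p ∧ β p ≤ α p.succ + 1 := by
  intro p
  have hN : (netLap A).IsHermitian := aux_netLap_herm A hA.1
  have hN' : (netLap (deleteVertex A v)).IsHermitian :=
    aux_netLap_herm _ (aux_deleteVertex_symm A hA.1 v)
  have hd : ∀ i : Fin m, |A (v.succAbove i) v| ≤ 1 := by
    intro i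
    rcases hA.2.2 (v.succAbove i) v with h | h | h <;> rw [h] <;> norm_num
  exact aux_key (netLap A) (netLap (deleteVertex A v)) hN hN' v
    (fun i => A (v.succAbove i) v) (aux_netLap_sub A v) hd α β
    hα.1 hα.2 hβ.1 hβ.2 p
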